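/- arXiv:0802.2769 — 4 statements merged into one kernel-verified Lean document; each statement's English description precedes it below -/
import Mathlib

section
/- Let I ⊂ S be a monomial ideal with dim S/I = d, and let g ∈ ℕ^n satisfy g ≥ a for every exponent vector a of a minimal generator of I. Then for every b ∈ ℕ^n with x^b ∉ I, the number ρ(b) = |{j : b(j) = g(j)}| satisfies ρ(b) ≤ d. -/
open MvPolynomial

/-- The monomial `x^c = x_1^{c 1} ⋯ x_n^{c n}` in `K[x_1,…,x_n]`. -/
noncomputable def monX (n : ℕ) (K : Type*) [Field K] (c : Fin n → ℕ) :
    MvPolynomial (Fin n) K := ∏ i, X i ^ c i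

/-- `ρ(b) = |{k : b k = g k}|`. -/
def rho {n : ℕ} (g b : Fin n → ℕ) : ℕ := (Finset.univ.filter fun k => b k = g k).card

/-- The `j`-th skeleton ideal of `I` with respect to `g`: the ideal generated by `I`
together with all monomials `x^b` with `ρ(b) > j`. -/
noncomputable def skel {n : ℕ} (K : Type*) [Field K]
    (I : Ideal (MvPolynomial (Fin n) K)) (g : Fin n → ℕ) (j : ℕ) :
    Ideal (MvPolynomial (Fin n) K) :=
  I ⊔ Ideal.span {m | ∃ b : Fin n → ℕ, j < rho g b ∧ m = monX n K b}

/-- The characteristic poset `P^g_{S/I} = {b ∈ ℕ^n : b ≤ g, x^b ∉ I}`. -/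
def charPoset {n : ℕ} (K : Type*) [Field K]
    (I : Ideal (MvPolynomial (Fin n) K)) (g : Fin n → ℕ) : Set (Fin n → ℕ) :=
  {b | b ≤ g ∧ monX n K b ∉ I}

/-- The characteristic poset `P^g_{J/I} = {b ∈ ℕ^n : b ≤ g, x^b ∈ J \ I}`. -/
def charPoset2 {n : ℕ} (K : Type*) [Field K]
    (I J : Ideal (MvPolynomial (Fin n) K)) (g : Fin n → ℕ) : Set (Fin n → ℕ) :=
  {b | b ≤ g ∧ monX n K b ∈ J ∧ monX n K b ∉ I}

/-- The graded maximal ideal `m = (x_1,…,x_n)`. -/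
noncomputable def mxId (n : ℕ) (K : Type*) [Field K] : Ideal (MvPolynomial (Fin n) K) :=
  Ideal.span (Set.range (X : Fin n → MvPolynomial (Fin n) K))

/-- The depth of a module over `S = K[x_1,…,x_n]` with respect to the graded
maximal ideal: the supremum of lengths of regular sequences contained in `m`. -/
noncomputable def mdepth (n : ℕ) (K : Type*) [Field K] (M : Type*) [AddCommGroup M]
    [Module (MvPolynomial (Fin n) K) M] : ℕ :=
  sSup {r | ∃ rs : List (MvPolynomial (Fin n) K), rs.length = r ∧
    (∀ x ∈ rs, x ∈ mxId n K) ∧ RingTheory.Sequence.IsRegular M rs}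

/-- Krull dimension of a module: `dim S/ann M`. -/
noncomputable def mdim (n : ℕ) (K : Type*) [Field K] (M : Type*) [AddCommGroup M]
    [Module (MvPolynomial (Fin n) K) M] : WithBot (WithTop ℕ) :=
  ringKrullDim (MvPolynomial (Fin n) K ⧸ Module.annihilator (MvPolynomial (Fin n) K) M)

/-- `M` is a Cohen–Macaulay `S`-module of dimension `j`. -/
noncomputable def IsCMof (n : ℕ) (K : Type*) [Field K] (M : Type*) [AddCommGroup M]
    [Module (MvPolynomial (Fin n) K) M] (j : ℕ) : Prop :=
  mdepth n K M = j ∧ mdim n K M = (j : WithBot (WithTop ℕ))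

/-- `M` is a Cohen–Macaulay `S`-module (depth = Krull dimension). -/
noncomputable def IsCM (n : ℕ) (K : Type*) [Field K] (M : Type*) [AddCommGroup M]
    [Module (MvPolynomial (Fin n) K) M] : Prop :=
  (mdepth n K M : WithBot (WithTop ℕ)) = mdim n K M

/-- A partition of a subset `P` of `ℕ^n` into (nonempty) intervals `[cᵢ, dᵢ]`. -/
structure IntervalPartition {n : ℕ} (P : Set (Fin n → ℕ)) where
  r : ℕ
  c : Fin r → (Fin n → ℕ)
  d : Fin r → (Fin n → ℕ)
  le : ∀ i, c i ≤ d i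
  cover : P = ⋃ i, Set.Icc (c i) (d i)
  disj : Pairwise (Function.onFun Disjoint fun i => Set.Icc (c i) (d i))

/-- The (combinatorial) Stanley depth of `S/I`: the maximum over interval partitions
of the characteristic poset `P^g_{S/I}` of `min_i ρ(dᵢ)` (Herzog–Vladoiu–Zheng). -/
noncomputable def sdepthQ {n : ℕ} (K : Type*) [Field K]
    (I : Ideal (MvPolynomial (Fin n) K)) (g : Fin n → ℕ) : ℕ :=
  sSup {t | ∃ P : IntervalPartition (charPoset K I g), ∀ i, t ≤ rho g (P.d i)}

/-- The set of exponents `{c + e : supp e ⊆ Z}`, i.e. the exponents of the monomials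
spanning the Stanley space `x^c K[Z]`. -/
def orth {n : ℕ} (c : Fin n → ℕ) (Z : Finset (Fin n)) : Set (Fin n → ℕ) :=
  {b | c ≤ b ∧ ∀ k ∉ Z, b k = c k}

/-- A Stanley decomposition of `J/I` (for monomial ideals `I ⊆ J`), encoded by the
induced partition of the monomial `K`-basis of `J/I` into Stanley spaces `x^{cᵢ} K[Zᵢ]`. -/
structure StanleyDec {n : ℕ} (K : Type*) [Field K]
    (I J : Ideal (MvPolynomial (Fin n) K)) where
  r : ℕ
  c : Fin r → (Fin n → ℕ)
  Z : Fin r → Finset (Fin n)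
  cover : {b | monX n K b ∈ J ∧ monX n K b ∉ I} = ⋃ i, orth (c i) (Z i)
  disj : Pairwise (Function.onFun Disjoint fun i => orth (c i) (Z i))

/-- The `h`-regularity of `J/I`: the minimum over Stanley decompositions of `max_i |cᵢ|`. -/
noncomputable def hregQ {n : ℕ} (K : Type*) [Field K]
    (I J : Ideal (MvPolynomial (Fin n) K)) : ℕ :=
  sInf {h | ∃ D : StanleyDec K I J, ∀ i, (∑ k, D.c i k) ≤ h}

/-- `σ(Pt) = max_i max{|c| : c ∈ [cᵢ,dᵢ], c k = cᵢ k for all k with dᵢ k = g k}`. -/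
noncomputable def sigmaP {n : ℕ} (g : Fin n → ℕ) {P : Set (Fin n → ℕ)}
    (Pt : IntervalPartition P) : ℕ :=
  sSup {s | ∃ i : Fin Pt.r, ∃ cc ∈ Set.Icc (Pt.c i) (Pt.d i),
    (∀ k, Pt.d i k = g k → cc k = Pt.c i k) ∧ s = ∑ k, cc k}

/-- The truncation `I_{≥ j}`: the ideal generated by all homogeneous elements of `I`
of degree at least `j`. -/
noncomputable def trunc {n : ℕ} (K : Type*) [Field K]
    (I : Ideal (MvPolynomial (Fin n) K)) (j : ℕ) : Ideal (MvPolynomial (Fin n) K) :=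
  Ideal.span {f | f ∈ I ∧ ∃ d, j ≤ d ∧ MvPolynomial.IsHomogeneous f d}

/-- A `d`-linear (graded free) resolution of the ideal `I`: a finite exact complex of
finite free modules augmented to `I`, in which the entries of the augmentation are
homogeneous of degree `d` and all entries of the differentials are linear forms. -/
structure LinearRes {n : ℕ} (K : Type*) [Field K]
    (I : Ideal (MvPolynomial (Fin n) K)) (d : ℕ) where
  len : ℕ
  b : ℕ → ℕ
  fin : ∀ i, len < i → b i = 0
  ε : (Fin (b 0) →₀ MvPolynomial (Fin n) K) →ₗ[MvPolynomial (Fin n) K]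
      MvPolynomial (Fin n) K
  δ : ∀ i : ℕ, (Fin (b (i+1)) →₀ MvPolynomial (Fin n) K) →ₗ[MvPolynomial (Fin n) K]
      (Fin (b i) →₀ MvPolynomial (Fin n) K)
  hε : ∀ j, MvPolynomial.IsHomogeneous (ε (Finsupp.single j 1)) d
  hδ : ∀ i j k, MvPolynomial.IsHomogeneous ((δ i (Finsupp.single j 1)) k) 1
  surj : LinearMap.range ε = (I : Submodule (MvPolynomial (Fin n) K) (MvPolynomial (Fin n) K))
  exact0 : LinearMap.ker ε = LinearMap.range (δ 0)
  exact : ∀ i, LinearMap.ker (δ i) = LinearMap.range (δ (i+1))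

/-- The Castelnuovo–Mumford regularity of `I`, via the Eisenbud–Goto characterization
`reg(I) = min{d : I_{≥ d} has a d-linear resolution}`. -/
noncomputable def regEG {n : ℕ} (K : Type*) [Field K]
    (I : Ideal (MvPolynomial (Fin n) K)) : ℕ :=
  sInf {d | Nonempty (LinearRes K (trunc K I d) d)}

open Classical in
noncomputable def tauMap {n : ℕ} (K : Type*) [Field K] (T : Set (Fin n)) :
    MvPolynomial (Fin n) K →ₐ[K] MvPolynomial (Fin n) K :=
  aeval (fun k => if k ∈ T then 0 else X k)

lemma tauMap_X_of_mem {n : ℕ} {K : Type*} [Field K] {T : Set (Fin n)} {k : Fin n}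
    (hk : k ∈ T) : tauMap K T (X k) = 0 := by
  rw [tauMap, aeval_X, if_pos hk]

lemma tauMap_X_of_not_mem {n : ℕ} {K : Type*} [Field K] {T : Set (Fin n)} {k : Fin n}
    (hk : k ∉ T) : tauMap K T (X k) = X k := by
  rw [tauMap, aeval_X, if_neg hk]

lemma sub_tauMap_mem {n : ℕ} {K : Type*} [Field K] (T : Set (Fin n))
    (f : MvPolynomial (Fin n) K) :
    f - tauMap K T f ∈ Ideal.span ((X : Fin n → MvPolynomial (Fin n) K) '' T) := by
  induction f using MvPolynomial.induction_on with
  | C a => simp [tauMap]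
  | add p q hp hq =>
    have h := Ideal.add_mem _ hp hq
    convert h using 1
    rw [map_add]
    ring
  | mul_X p i hp =>
    rw [map_mul]
    by_cases hi : i ∈ T
    · rw [tauMap_X_of_mem hi, mul_zero, sub_zero]
      exact Ideal.mul_mem_left _ p (Ideal.subset_span ⟨i, hi, rfl⟩)
    · rw [tauMap_X_of_not_mem hi]
      have h2 : p * X i - tauMap K T p * X i = (p - tauMap K T p) * X i := by ring
      rw [h2]
      exact Ideal.mul_mem_right _ _ hp

lemma span_X_eq_ker {n : ℕ} (K : Type*) [Field K] (T : Set (Fin n)) :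
    Ideal.span ((X : Fin n → MvPolynomial (Fin n) K) '' T)
      = RingHom.ker (tauMap K T).toRingHom := by
  apply le_antisymm
  · rw [Ideal.span_le]
    rintro _ ⟨k, hk, rfl⟩
    rw [SetLike.mem_coe, RingHom.mem_ker]
    exact tauMap_X_of_mem hk
  · intro f hf
    rw [RingHom.mem_ker] at hf
    have hf' : tauMap K T f = 0 := hf
    have h := sub_tauMap_mem T f
    rwa [hf', sub_zero] at h

lemma span_X_isPrime {n : ℕ} (K : Type*) [Field K] (T : Set (Fin n)) :
    (Ideal.span ((X : Fin n → MvPolynomial (Fin n) K) '' T)).IsPrime := by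
  rw [span_X_eq_ker]
  exact RingHom.ker_isPrime _

lemma X_not_mem_span {n : ℕ} (K : Type*) [Field K] (T : Set (Fin n)) {k : Fin n}
    (hk : k ∉ T) : (X k : MvPolynomial (Fin n) K) ∉
      Ideal.span ((X : Fin n → MvPolynomial (Fin n) K) '' T) := by
  rw [span_X_eq_ker]
  intro h
  rw [RingHom.mem_ker] at h
  have h' : tauMap K T (X k) = 0 := h
  rw [tauMap_X_of_not_mem hk] at h'
  exact X_ne_zero k h'

/-- if `dim S/I = d` and `g` dominates the minimal generator exponents
of `I`, then `ρ(b) ≤ d` for every `b` with `x^b ∉ I`. -/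
theorem rho_le_dim (n m : ℕ) (K : Type*) [Field K]
    (a : Fin m → (Fin n → ℕ)) (I : Ideal (MvPolynomial (Fin n) K))
    (hI : I = Ideal.span (Set.range fun i => monX n K (a i)))
    (hmin : ∀ i j, i ≠ j → ¬ a i ≤ a j)
    (g : Fin n → ℕ) (hg : ∀ i, a i ≤ g)
    (d : ℕ) (hd : ringKrullDim (MvPolynomial (Fin n) K ⧸ I) = (d : WithBot (WithTop ℕ))) :
    ∀ b : Fin n → ℕ, monX n K b ∉ I → rho g b ≤ d := by
  intro b hb
  classical
  set F : Finset (Fin n) := Finset.univ.filter (fun k => b k = g k) with hF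
  have hrho : rho g b = F.card := rfl
  set ρ := F.card with hρ
  let e : Fin ρ ≃o F := F.orderIsoOfFin rfl
  let T : Fin (ρ + 1) → Set (Fin n) := fun j =>
    {k | k ∉ F ∨ ∃ t : Fin ρ, (t : ℕ) < (j : ℕ) ∧ (e t : Fin n) = k}
  let P : Fin (ρ + 1) → Ideal (MvPolynomial (Fin n) K) := fun j =>
    Ideal.span ((X : Fin n → MvPolynomial (Fin n) K) '' T j)
  have hTmono : ∀ {j j' : Fin (ρ + 1)}, j ≤ j' → T j ⊆ T j' := by
    intro j j' hjj' k hk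
    rcases hk with hk | ⟨t, ht, hte⟩
    · exact Or.inl hk
    · exact Or.inr ⟨t, lt_of_lt_of_le ht hjj', hte⟩
  have hIP : ∀ j, I ≤ P j := by
    intro j
    rw [hI, Ideal.span_le]
    rintro _ ⟨i, rfl⟩
    by_cases hak : ∃ k, k ∉ F ∧ a i k ≠ 0
    · obtain ⟨k, hkF, hk0⟩ := hak
      have hdvd : (X k : MvPolynomial (Fin n) K) ∣ monX n K (a i) :=
        dvd_trans (dvd_pow_self (X k) hk0)
          (Finset.dvd_prod_of_mem (fun t => (X t : MvPolynomial (Fin n) K) ^ a i t)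
            (Finset.mem_univ k))
      obtain ⟨c, hc⟩ := hdvd
      show monX n K (a i) ∈ P j
      rw [hc]
      exact Ideal.mul_mem_right _ _ (Ideal.subset_span ⟨k, Or.inl hkF, rfl⟩)
    · exfalso
      apply hb
      push_neg at hak
      have hab : a i ≤ b := by
        intro k
        by_cases hkF : k ∈ F
        · have hbk : b k = g k := (Finset.mem_filter.mp hkF).2
          rw [hbk]
          exact hg i k
        · rw [hak k hkF]
          exact Nat.zero_le _
      have hsplit : monX n K b = monX n K (a i) * monX n K (fun k => b k - a i k) := by
        rw [monX, monX, monX, ← Finset.prod_mul_distrib]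
        apply Finset.prod_congr rfl
        intro k _
        rw [← pow_add, Nat.add_sub_cancel' (hab k)]
      rw [hsplit, hI]
      exact Ideal.mul_mem_right _ _ (Ideal.subset_span ⟨i, rfl⟩)
  have hprime : ∀ j, ((P j).map (Ideal.Quotient.mk I)).IsPrime := by
    intro j
    haveI := span_X_isPrime K (T j)
    exact Ideal.map_isPrime_of_surjective Ideal.Quotient.mk_surjective
      (by rw [Ideal.mk_ker]; exact hIP j)
  have hlt : ∀ j : Fin ρ,
      (P j.castSucc).map (Ideal.Quotient.mk I) < (P j.succ).map (Ideal.Quotient.mk I) := by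
    intro j
    set k₀ : Fin n := (e j : Fin n) with hk₀
    have hk₀F : k₀ ∈ F := (e j).2
    have hk₀notT : k₀ ∉ T j.castSucc := by
      rintro (h | ⟨t, ht, hte⟩)
      · exact h hk₀F
      · have : e t = e j := Subtype.coe_injective hte
        have htj : t = j := e.injective this
        rw [htj] at ht
        simp at ht
    have hk₀T : k₀ ∈ T j.succ := by
      refine Or.inr ⟨j, ?_, rfl⟩
      simp
    refine lt_of_le_not_ge
      (Ideal.map_mono (Ideal.span_mono (Set.image_mono (hTmono (Fin.castSucc_le_succ j))))) ?_
    intro hle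
    have hmem : Ideal.Quotient.mk I (X k₀) ∈ (P j.succ).map (Ideal.Quotient.mk I) :=
      Ideal.mem_map_of_mem _ (Ideal.subset_span ⟨k₀, hk₀T, rfl⟩)
    have hmem' := hle hmem
    have hcomap : (X k₀ : MvPolynomial (Fin n) K) ∈
        Ideal.comap (Ideal.Quotient.mk I) ((P j.castSucc).map (Ideal.Quotient.mk I)) := hmem'
    rw [Ideal.comap_map_of_surjective _ Ideal.Quotient.mk_surjective,
      ← RingHom.ker_eq_comap_bot, Ideal.mk_ker,
      sup_eq_left.mpr (hIP j.castSucc)] at hcomap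
    exact X_not_mem_span K (T j.castSucc) hk₀notT hcomap
  let p : LTSeries (PrimeSpectrum (MvPolynomial (Fin n) K ⧸ I)) :=
    { length := ρ
      toFun := fun j => ⟨(P j).map (Ideal.Quotient.mk I), hprime j⟩
      step := fun j => (PrimeSpectrum.asIdeal_lt_asIdeal _ _).mp (hlt j) }
  have hle := Order.LTSeries.length_le_krullDim p
  have hle' : (ρ : WithBot (WithTop ℕ)) ≤ ringKrullDim (MvPolynomial (Fin n) K ⧸ I) := hle
  rw [hd] at hle'
  rw [hrho]
  exact_mod_cast hle'
end

section
/- Let A = {b ∈ P^g_{S/I} : ρ(b) = d} where d = dim S/I, and for a subset Z ⊆ {x_1,...,x_n} let A_Z = {b ∈ A : Z_b = Z}, where Z_b = {x_k : b(k) = g(k)}. If b, b' ∈ A_Z then b ∧ b' ∈ A_Z; consequently A_Z has a unique minimal element. -/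
open MvPolynomial

lemma monX_eq_monomial (n : ℕ) (K : Type*) [Field K] (c : Fin n → ℕ) :
    monX n K c = monomial (Finsupp.equivFunOnFinite.symm c) 1 := by
  rw [monX, monomial_eq, C_1, one_mul, Finsupp.prod]
  refine (Finset.prod_subset (Finset.subset_univ _) ?_).symm
  intro i _ hi
  simp only [Finsupp.mem_support_iff, ne_eq, not_not,
    Finsupp.coe_equivFunOnFinite_symm] at hi
  rw [hi, pow_zero]

lemma monX_mem_iff (n m : ℕ) (K : Type*) [Field K] (a : Fin m → (Fin n → ℕ))
    (c : Fin n → ℕ) :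
    monX n K c ∈ Ideal.span (Set.range fun i => monX n K (a i)) ↔ ∃ i, a i ≤ c := by
  have h : (Set.range fun i => monX n K (a i)) =
      (fun s => monomial s (1:K)) '' (Set.range fun i => Finsupp.equivFunOnFinite.symm (a i)) := by
    ext x
    simp [monX_eq_monomial, Set.range_comp]
  rw [h, monX_eq_monomial, mem_ideal_span_monomial_image]
  constructor
  · intro H
    obtain ⟨si, ⟨i, rfl⟩, hle⟩ := H (Finsupp.equivFunOnFinite.symm c) (by
      simp [support_monomial])
    exact ⟨i, fun k => hle k⟩
  · rintro ⟨i, hi⟩ xi hxi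
    classical
    rw [support_monomial, if_neg one_ne_zero, Finset.mem_singleton] at hxi
    subst hxi
    exact ⟨_, ⟨i, rfl⟩, fun k => hi k⟩


/-- for `A = {b ∈ P^g_{S/I} : ρ(b) = d}` and a subset `Z` of indices,
the set `A_Z = {b ∈ A : Z_b = Z}` is closed under componentwise meets; consequently,
if nonempty, it has a unique minimal element. -/
theorem AZ_meet_closed (n m : ℕ) (K : Type*) [Field K]
    (a : Fin m → (Fin n → ℕ)) (I : Ideal (MvPolynomial (Fin n) K))
    (hI : I = Ideal.span (Set.range fun i => monX n K (a i)))
    (hmin : ∀ i j, i ≠ j → ¬ a i ≤ a j)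
    (g : Fin n → ℕ) (hg : ∀ i, a i ≤ g)
    (d : ℕ) (hd : ringKrullDim (MvPolynomial (Fin n) K ⧸ I) = (d : WithBot (WithTop ℕ))) (Z : Set (Fin n)) :
    (∀ b ∈ {b | b ∈ charPoset K I g ∧ rho g b = d ∧ {k | b k = g k} = Z},
     ∀ b' ∈ {b | b ∈ charPoset K I g ∧ rho g b = d ∧ {k | b k = g k} = Z},
       (fun k => min (b k) (b' k)) ∈
         {b | b ∈ charPoset K I g ∧ rho g b = d ∧ {k | b k = g k} = Z}) ∧
    ({b | b ∈ charPoset K I g ∧ rho g b = d ∧ {k | b k = g k} = Z}.Nonempty →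
      ∃! b₀, b₀ ∈ {b | b ∈ charPoset K I g ∧ rho g b = d ∧ {k | b k = g k} = Z} ∧
        ∀ b ∈ {b | b ∈ charPoset K I g ∧ rho g b = d ∧ {k | b k = g k} = Z}, b₀ ≤ b) := by
  classical
  set A : Set (Fin n → ℕ) :=
    {b | b ∈ charPoset K I g ∧ rho g b = d ∧ {k | b k = g k} = Z} with hA
  have meet : ∀ b ∈ A, ∀ b' ∈ A, (fun k => min (b k) (b' k)) ∈ A := by
    rintro b ⟨⟨hbg, hbI⟩, hbr, hbZ⟩ b' ⟨⟨hbg', hbI'⟩, _, hbZ'⟩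
    set w : Fin n → ℕ := fun k => min (b k) (b' k) with hw
    have hbb' : ∀ k, b k = g k ↔ b' k = g k := by
      intro k
      have h1 : b k = g k ↔ k ∈ Z := Set.ext_iff.1 hbZ k
      have h2 : b' k = g k ↔ k ∈ Z := Set.ext_iff.1 hbZ' k
      rw [h1, h2]
    have hwb : ∀ k, w k = g k ↔ b k = g k := by
      intro k
      constructor
      · intro h
        have h1 : min (b k) (b' k) ≤ b k := min_le_left _ _
        have h2 : b k ≤ g k := hbg k
        have h3 : min (b k) (b' k) = g k := h
        omega
      · intro h
        have h2 := (hbb' k).1 h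
        simp only [hw]
        simp [h, h2]
    have hwZ : {k | w k = g k} = Z := by
      rw [← hbZ]; ext k; exact hwb k
    have hfilter : (Finset.univ.filter fun k => w k = g k)
        = (Finset.univ.filter fun k => b k = g k) := by
      ext k
      simp [hwb k]
    refine ⟨⟨fun k => le_trans (min_le_left _ _) (hbg k), ?_⟩, ?_, hwZ⟩
    · intro hmem
      rw [hI, monX_mem_iff] at hmem
      obtain ⟨i, hi⟩ := hmem
      exact hbI (hI ▸ (monX_mem_iff n m K a b).2
        ⟨i, fun k => le_trans (hi k) (min_le_left _ _)⟩)
    · rw [rho, hfilter, ← rho, hbr]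
  refine ⟨meet, ?_⟩
  rintro ⟨b, hb⟩
  -- pick an element of minimal total degree
  have hne : ((fun c => ∑ k, c k) '' A).Nonempty := ⟨_, b, hb, rfl⟩
  obtain ⟨b₀, hb₀A, hb₀s⟩ := Nat.sInf_mem hne
  have hleast : ∀ c ∈ A, b₀ ≤ c := by
    intro c hc
    have hwA := meet b₀ hb₀A c hc
    have h1 : ∑ k, min (b₀ k) (c k) ≤ ∑ k, b₀ k :=
      Finset.sum_le_sum fun k _ => min_le_left _ _
    have h2 : ∑ k, b₀ k ≤ ∑ k, min (b₀ k) (c k) :=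
      hb₀s.trans_le (Nat.sInf_le ⟨_, hwA, rfl⟩)
    have heq := (Finset.sum_eq_sum_iff_of_le fun k _ => min_le_left (b₀ k) (c k)).1
        (le_antisymm h1 h2)
    intro k
    have := heq k (Finset.mem_univ k)
    calc b₀ k = min (b₀ k) (c k) := this.symm
    _ ≤ c k := min_le_right _ _
  refine ⟨b₀, ⟨hb₀A, hleast⟩, ?_⟩
  rintro b₁ ⟨hb₁A, hb₁least⟩
  exact le_antisymm (hb₁least b₀ hb₀A) (hleast b₁ hb₁A)
end

section
/- In the setting of Theorem on skeletons: let b_i be the minimal element of A_i = {b ∈ A : Z_b = Z_i} (A = {b ∈ P^g_{S/I} : ρ(b) = d}), and let f_i = x^{b_i} + I ∈ J/I where J = (I, {x^b : b ∈ A}). If a monomial x^c with c = c_1 + c_2, supp(c_1) ⊆ Z_{b_i} and supp(c_2) ⊆ Y_{b_i}, annihilates f_i, then already x^{c_2} annihilates f_i. Hence Ann(S f_i) is generated by monomials in the variables Y_{b_i}. -/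
open MvPolynomial

lemma monX_eq (n : ℕ) (K : Type*) [Field K] (c : Fin n → ℕ) :
    monX n K c = monomial (Finsupp.equivFunOnFinite.symm c) (1 : K) := by
  rw [monomial_eq, C_1, one_mul]
  rw [Finsupp.prod]
  refine (Finset.prod_subset (Finset.subset_univ _) ?_).symm
  intro i _ hi
  have h0 : c i = 0 := by simpa using Finsupp.notMem_support_iff.mp hi
  rw [h0, pow_zero]

lemma monX_add (n : ℕ) (K : Type*) [Field K] (u v : Fin n → ℕ) :
    monX n K (u + v) = monX n K u * monX n K v := by
  simp [monX, pow_add, Finset.prod_mul_distrib]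

lemma memI (n m : ℕ) (K : Type*) [Field K] (a : Fin m → (Fin n → ℕ)) (e : Fin n → ℕ) :
    monX n K e ∈ Ideal.span (Set.range fun i => monX n K (a i)) ↔ ∃ j, a j ≤ e := by
  classical
  have hr : (Set.range fun i => monX n K (a i)) =
      (fun s => monomial s (1 : K)) '' (Set.range fun i => Finsupp.equivFunOnFinite.symm (a i)) := by
    rw [← Set.range_comp]
    exact congrArg Set.range (funext fun i => monX_eq n K (a i))
  rw [hr, monX_eq, mem_ideal_span_monomial_image]
  constructor
  · intro h
    obtain ⟨si, hsi, hle⟩ := h (Finsupp.equivFunOnFinite.symm e) (by simp [support_monomial])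
    obtain ⟨j, rfl⟩ := hsi
    refine ⟨j, fun k => ?_⟩
    exact hle k
  · rintro ⟨j, hj⟩ xi hxi
    rw [support_monomial, if_neg one_ne_zero, Finset.mem_singleton] at hxi
    subst hxi
    exact ⟨_, ⟨j, rfl⟩, fun k => hj k⟩

lemma memI' (n m : ℕ) (K : Type*) [Field K] (a : Fin m → (Fin n → ℕ))
    (f : MvPolynomial (Fin n) K) :
    f ∈ Ideal.span (Set.range fun i => monX n K (a i)) ↔
      ∀ xi ∈ f.support, ∃ j, Finsupp.equivFunOnFinite.symm (a j) ≤ xi := by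
  have hr : (Set.range fun i => monX n K (a i)) =
      (fun s => monomial s (1 : K)) '' (Set.range fun i => Finsupp.equivFunOnFinite.symm (a i)) := by
    rw [← Set.range_comp]
    exact congrArg Set.range (funext fun i => monX_eq n K (a i))
  rw [hr, mem_ideal_span_monomial_image]
  constructor
  · intro h xi hxi
    obtain ⟨si, ⟨j, rfl⟩, hle⟩ := h xi hxi
    exact ⟨j, hle⟩
  · intro h xi hxi
    obtain ⟨j, hle⟩ := h xi hxi
    exact ⟨_, ⟨j, rfl⟩, hle⟩

/-- with `b_i` the minimal element of `A_i` and `f_i = x^{b_i} + I`, if a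
monomial `x^c` with `c = c₁ + c₂`, `supp c₁ ⊆ Z_{b_i}`, `supp c₂ ⊆ Y_{b_i}`,
annihilates `f_i`, then already `x^{c₂}` annihilates `f_i`; hence the annihilator of
`S f_i` (the colon ideal `I : x^{b_i}`) is generated by monomials in the variables
`Y_{b_i}`. -/
theorem annihilator_in_Y (n m : ℕ) (K : Type*) [Field K]
    (a : Fin m → (Fin n → ℕ)) (I : Ideal (MvPolynomial (Fin n) K))
    (hI : I = Ideal.span (Set.range fun i => monX n K (a i)))
    (hmin : ∀ i j, i ≠ j → ¬ a i ≤ a j)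
    (g : Fin n → ℕ) (hg : ∀ i, a i ≤ g)
    (d : ℕ) (hd : ringKrullDim (MvPolynomial (Fin n) K ⧸ I) = (d : WithBot (WithTop ℕ)))
    (b : Fin n → ℕ) (hb : b ∈ charPoset K I g) (hrho : rho g b = d)
    (hbmin : ∀ b' ∈ charPoset K I g, rho g b' = d →
      {k | b' k = g k} = {k | b k = g k} → b ≤ b') :
    (∀ c₁ c₂ : Fin n → ℕ, (∀ k, c₁ k ≠ 0 → b k = g k) → (∀ k, c₂ k ≠ 0 → b k ≠ g k) →
        monX n K (b + c₁ + c₂) ∈ I → monX n K (b + c₂) ∈ I) ∧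
    ∃ T : Set (Fin n → ℕ), (∀ t ∈ T, ∀ k, t k ≠ 0 → b k ≠ g k) ∧
      Submodule.colon (I : Submodule (MvPolynomial (Fin n) K) (MvPolynomial (Fin n) K))
          (Submodule.span (MvPolynomial (Fin n) K) {monX n K b}) = Ideal.span (monX n K '' T) := by
  classical
  subst hI
  have part1 : ∀ c₁ c₂ : Fin n → ℕ, (∀ k, c₁ k ≠ 0 → b k = g k) → (∀ k, c₂ k ≠ 0 → b k ≠ g k) →
      monX n K (b + c₁ + c₂) ∈ Ideal.span (Set.range fun i => monX n K (a i)) →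
      monX n K (b + c₂) ∈ Ideal.span (Set.range fun i => monX n K (a i)) := by
    intro c₁ c₂ h1 h2 hmem
    rw [memI] at hmem ⊢
    obtain ⟨j, hj⟩ := hmem
    refine ⟨j, fun k => ?_⟩
    show a j k ≤ b k + c₂ k
    by_cases hk : b k = g k
    · have hc2 : c₂ k = 0 := by
        by_contra h; exact h2 k h hk
      rw [hc2, add_zero, hk]
      exact hg j k
    · have hc1 : c₁ k = 0 := by
        by_contra h; exact hk (h1 k h)
      have := hj k
      simpa [hc1] using this
  refine ⟨part1, ⟨{t | (∀ k, t k ≠ 0 → b k ≠ g k) ∧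
      monX n K (b + t) ∈ Ideal.span (Set.range fun i => monX n K (a i))},
      fun t ht => ht.1, le_antisymm ?_ ?_⟩⟩
  · intro f hf
    rw [Submodule.mem_colon_span_singleton, smul_eq_mul] at hf
    have key : ∀ c ∈ f.support, ∃ j, ∀ k, a j k ≤ (c : Fin n → ℕ) k + b k := by
      intro c hc
      have hsupp : c + Finsupp.equivFunOnFinite.symm b ∈ (f * monX n K b).support := by
        rw [MvPolynomial.mem_support_iff, monX_eq, coeff_mul_monomial, mul_one]
        exact MvPolynomial.mem_support_iff.mp hc
      obtain ⟨j, hj⟩ := (memI' n m K a _).mp hf _ hsupp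
      refine ⟨j, fun k => ?_⟩
      simpa using hj k
    rw [MvPolynomial.as_sum f]
    refine Ideal.sum_mem _ fun c hc => ?_
    obtain ⟨j, hj⟩ := key c hc
    set c1 : Fin n → ℕ := fun k => if b k = g k then c k else 0 with hc1
    set c2 : Fin n → ℕ := fun k => if b k = g k then 0 else c k with hc2
    have hsplit : (c : Fin n → ℕ) = c1 + c2 := by
      funext k
      by_cases hk : b k = g k <;> simp [hc1, hc2, hk]
    have hmem : monX n K (b + c1 + c2) ∈ Ideal.span (Set.range fun i => monX n K (a i)) := by
      rw [memI]
      refine ⟨j, fun k => ?_⟩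
      have : (b + c1 + c2) k = c k + b k := by
        have := congrFun hsplit k
        simp only [Pi.add_apply] at this ⊢
        omega
      rw [this]
      exact hj k
    have hc2T : c2 ∈ {t | (∀ k, t k ≠ 0 → b k ≠ g k) ∧
        monX n K (b + t) ∈ Ideal.span (Set.range fun i => monX n K (a i))} := by
      refine ⟨fun k hk => ?_, part1 c1 c2 (fun k hk => ?_) (fun k hk => ?_) hmem⟩
      · intro hbk; simp [hc2, hbk] at hk
      · by_contra hbk; simp [hc1, hbk] at hk
      · intro hbk; simp [hc2, hbk] at hk
    have hterm : (monomial c) (MvPolynomial.coeff c f) =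
        C (MvPolynomial.coeff c f) * monX n K c1 * monX n K c2 := by
      rw [mul_assoc, ← monX_add, ← hsplit]
      rw [monX_eq, Finsupp.equivFunOnFinite_symm_coe, C_mul_monomial, mul_one]
    rw [hterm]
    exact Ideal.mul_mem_left _ _ (Ideal.subset_span ⟨c2, hc2T, rfl⟩)
  · rw [Ideal.span_le]
    rintro _ ⟨t, ht, rfl⟩
    show monX n K t ∈ Submodule.colon _ _
    rw [Submodule.mem_colon_span_singleton, smul_eq_mul, ← monX_add, add_comm t b]
    exact ht.2
end

section
/- For a monomial ideal I ⊂ S and any j ≥ 0, hreg(I) ≤ hreg(I_{≥ j}), where I_{≥ j} is the ideal generated by all homogeneous elements of I of degree ≥ j. -/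
open MvPolynomial

namespace HregAux

variable {n m : ℕ} {K : Type*} [Field K]

noncomputable def T {n : ℕ} (b : Fin n → ℕ) : Fin n →₀ ℕ := Finsupp.equivFunOnFinite.symm b

@[simp] lemma T_apply (b : Fin n → ℕ) (k : Fin n) : T b k = b k := rfl

lemma deg_eq (d : Fin n →₀ ℕ) : d.degree = ∑ k, d k := by
  rw [Finsupp.degree]
  exact Finset.sum_subset (Finset.subset_univ _)
    (fun x _ hx => Finsupp.notMem_support_iff.mp hx)

lemma T_degree (b : Fin n → ℕ) : (T b).degree = ∑ k, b k := by
  rw [deg_eq]; rfl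

lemma T_le_iff {a b : Fin n → ℕ} : T a ≤ T b ↔ a ≤ b := by
  rw [Finsupp.le_def]; rfl

lemma monX_eq (b : Fin n → ℕ) : monX n K b = monomial (T b) 1 := by
  rw [← prod_X_pow_eq_monomial, monX]
  exact (Finset.prod_subset (Finset.subset_univ _) fun x _ hx => by
    have h0 : b x = 0 := Finsupp.notMem_support_iff.mp hx
    rw [h0, pow_zero]).symm

lemma coeff_monX (b : Fin n → ℕ) : coeff (T b) (monX n K b) = 1 := by
  rw [monX_eq, coeff_monomial, if_pos rfl]

lemma monX_ne_zero (b : Fin n → ℕ) : monX n K b ≠ 0 := fun h => by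
  have := coeff_monX (K := K) b
  rw [h, coeff_zero] at this
  exact one_ne_zero (α := K) this.symm

lemma monX_isHom (b : Fin n → ℕ) : IsHomogeneous (monX n K b) (∑ k, b k) := by
  rw [monX_eq]; exact isHomogeneous_monomial _ (T_degree b)

lemma monX_add (u v : Fin n → ℕ) : monX n K (u + v) = monX n K u * monX n K v := by
  simp [monX, pow_add, Finset.prod_mul_distrib]

lemma monX_mem_of_le {I : Ideal (MvPolynomial (Fin n) K)} {u v : Fin n → ℕ}
    (h : monX n K u ∈ I) (huv : u ≤ v) : monX n K v ∈ I := by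
  have : v = u + (v - u) := funext fun k => (Nat.add_sub_cancel' (huv k)).symm
  rw [this, monX_add]
  exact Ideal.mul_mem_right _ _ h

lemma mem_I_iff (a : Fin m → Fin n → ℕ) (b : Fin n → ℕ) :
    monX n K b ∈ Ideal.span (Set.range fun i => monX n K (a i)) ↔ ∃ i, a i ≤ b := by
  constructor
  · intro h
    by_contra hno
    push_neg at hno
    obtain ⟨c, hc⟩ := Submodule.mem_span_range_iff_exists_fun (MvPolynomial (Fin n) K) |>.mp h
    have := congrArg (coeff (T b)) hc
    rw [coeff_monX] at this
    rw [coeff_sum] at this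
    have hz : ∀ i ∈ Finset.univ, coeff (T b) (c i • monX n K (a i)) = 0 := by
      intro i _
      rw [smul_eq_mul, monX_eq, coeff_mul_monomial', if_neg]
      rw [T_le_iff]
      exact hno i
    rw [Finset.sum_eq_zero hz] at this
    exact one_ne_zero this.symm
  · rintro ⟨i, hi⟩
    exact monX_mem_of_le (Ideal.subset_span ⟨i, rfl⟩) hi

lemma trunc_coeff {I : Ideal (MvPolynomial (Fin n) K)} {j : ℕ} {f : MvPolynomial (Fin n) K}
    (hf : f ∈ trunc K I j) : ∀ d : Fin n →₀ ℕ, (∑ k, d k) < j → coeff d f = 0 := by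
  refine Submodule.span_induction ?_ ?_ ?_ ?_ hf
  · rintro g ⟨hgI, d', hjd', hhom⟩ d hd
    exact hhom.coeff_eq_zero (by rw [deg_eq]; omega)
  · intro d _; exact coeff_zero d
  · intro x y _ _ hx hy d hd
    rw [coeff_add, hx d hd, hy d hd, add_zero]
  · intro r x _ hx d hd
    rw [smul_eq_mul, coeff_mul]
    refine Finset.sum_eq_zero fun p hp => ?_
    rw [Finset.HasAntidiagonal.mem_antidiagonal] at hp
    have h2 : (∑ k, p.2 k) ≤ ∑ k, d k := by
      rw [← hp]
      exact Finset.sum_le_sum fun k _ => by simp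
    rw [hx p.2 (by omega), mul_zero]

lemma mem_trunc_iff {I : Ideal (MvPolynomial (Fin n) K)} {j : ℕ} (b : Fin n → ℕ) :
    monX n K b ∈ trunc K I j ↔ monX n K b ∈ I ∧ j ≤ ∑ k, b k := by
  constructor
  · intro h
    constructor
    · exact Ideal.span_le.mpr (fun f hf => hf.1) h
    · by_contra hj
      push_neg at hj
      have := trunc_coeff h (T b) (by simpa using hj)
      rw [coeff_monX] at this
      exact one_ne_zero this
  · rintro ⟨hI, hj⟩
    exact Ideal.subset_span ⟨hI, ∑ k, b k, hj, monX_isHom b⟩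

lemma orth_empty (c : Fin n → ℕ) : orth c (∅ : Finset (Fin n)) = {c} := by
  ext b
  constructor
  · rintro ⟨_, h⟩
    exact funext fun k => h k (Finset.notMem_empty k)
  · rintro (rfl : b = c)
    exact ⟨le_rfl, fun _ _ => rfl⟩

lemma self_mem_orth (c : Fin n → ℕ) (Z : Finset (Fin n)) : c ∈ orth c Z :=
  ⟨le_rfl, fun _ _ => rfl⟩

end HregAux


section Part2
open HregAux

variable {n m : ℕ} {K : Type*} [Field K]

lemma exists_dec_trunc (a : Fin m → Fin n → ℕ) (I : Ideal (MvPolynomial (Fin n) K))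
    (hI : I = Ideal.span (Set.range fun i => monX n K (a i))) (j : ℕ) :
    ∃ h : ℕ, ∃ D : StanleyDec K ⊥ (trunc K I j), ∀ i, (∑ k, D.c i k) ≤ h := by
  classical
  set N : ℕ := j + ∑ i, ∑ k, a i k with hN
  have haN : ∀ i k, a i k ≤ N := by
    intro i k
    have h1 : a i k ≤ ∑ k, a i k :=
      Finset.single_le_sum (fun _ _ => Nat.zero_le _) (Finset.mem_univ k)
    have h2 : (∑ k, a i k) ≤ ∑ i, ∑ k, a i k :=
      Finset.single_le_sum (f := fun i => ∑ k, a i k) (fun _ _ => Nat.zero_le _)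
        (Finset.mem_univ i)
    omega
  have hfin : {c : Fin n → ℕ | ((∃ i, a i ≤ c) ∧ j ≤ ∑ k, c k) ∧ ∀ k, c k ≤ N}.Finite := by
    apply (Set.finite_Icc (0 : Fin n → ℕ) (fun _ => N)).subset
    rintro c ⟨_, hc⟩
    exact ⟨fun k => Nat.zero_le _, fun k => hc k⟩
  set Cs := hfin.toFinset with hCs
  have hCsmem : ∀ c : Fin n → ℕ, c ∈ Cs ↔ ((∃ i, a i ≤ c) ∧ j ≤ ∑ k, c k) ∧ ∀ k, c k ≤ N :=
    fun c => Set.Finite.mem_toFinset hfin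
  have hmemC : ∀ b : Fin n → ℕ, monX n K b ∈ trunc K I j ↔ (∃ i, a i ≤ b) ∧ j ≤ ∑ k, b k := by
    intro b; rw [mem_trunc_iff, hI, mem_I_iff]
  refine ⟨n * N, ⟨Cs.card, fun i => (Cs.equivFin.symm i : Fin n → ℕ),
    fun i => Finset.univ.filter fun k => (Cs.equivFin.symm i : Fin n → ℕ) k = N, ?_, ?_⟩, ?_⟩
  · ext b
    simp only [Set.mem_setOf_eq, Ideal.mem_bot, Set.mem_iUnion]
    rw [hmemC b]
    constructor
    · rintro ⟨⟨⟨i0, hi0⟩, hjb⟩, -⟩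
      set c0 : Fin n → ℕ := fun k => min (b k) N with hc0
      have hc0b : c0 ≤ b := fun k => min_le_left _ _
      have hc0N : ∀ k, c0 k ≤ N := fun k => min_le_right _ _
      have hc0I : ∃ i, a i ≤ c0 := ⟨i0, fun k => le_min (hi0 k) (haN i0 k)⟩
      have hc0j : j ≤ ∑ k, c0 k := by
        by_cases hb : ∀ k, b k ≤ N
        · have hcb : c0 = b := funext fun k => min_eq_left (hb k)
          rw [hcb]; exact hjb
        · push_neg at hb
          obtain ⟨k0, hk0⟩ := hb
          have h1 : c0 k0 = N := min_eq_right (le_of_lt hk0)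
          have h2 := Finset.single_le_sum (f := c0) (fun _ _ => Nat.zero_le _)
            (Finset.mem_univ k0)
          omega
      have hc0mem : c0 ∈ Cs := (hCsmem c0).mpr ⟨⟨hc0I, hc0j⟩, hc0N⟩
      refine ⟨Cs.equivFin ⟨c0, hc0mem⟩, ?_⟩
      have hcc : (Cs.equivFin.symm (Cs.equivFin ⟨c0, hc0mem⟩) : Fin n → ℕ) = c0 := by
        rw [Equiv.symm_apply_apply]
      simp only [hcc]
      refine ⟨hc0b, fun k hk => ?_⟩
      simp only [Finset.mem_filter, Finset.mem_univ, true_and] at hk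
      have hdef : c0 k = min (b k) N := rfl
      omega
    · rintro ⟨i, hcb, -⟩
      obtain ⟨⟨⟨i0, hi0⟩, hcj⟩, hcN⟩ := (hCsmem _).mp (Cs.equivFin.symm i).2
      exact ⟨⟨⟨i0, fun k => le_trans (hi0 k) (hcb k)⟩,
        le_trans hcj (Finset.sum_le_sum fun k _ => hcb k)⟩, monX_ne_zero b⟩
  · intro i i' hne
    rw [Function.onFun, Set.disjoint_left]
    intro b hb hb'
    apply hne
    have key : ∀ (i : Fin Cs.card),
        b ∈ orth ((Cs.equivFin.symm i : Fin n → ℕ))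
          (Finset.univ.filter fun k => (Cs.equivFin.symm i : Fin n → ℕ) k = N) →
        ∀ k, (Cs.equivFin.symm i : Fin n → ℕ) k = min (b k) N := by
      intro i hbm k
      obtain ⟨hcb, hoff⟩ := hbm
      have hciN : (Cs.equivFin.symm i : Fin n → ℕ) k ≤ N :=
        ((hCsmem _).mp (Cs.equivFin.symm i).2).2 k
      by_cases hk : (Cs.equivFin.symm i : Fin n → ℕ) k = N
      · have hNb : N ≤ b k := hk ▸ hcb k
        omega
      · have hbe : b k = (Cs.equivFin.symm i : Fin n → ℕ) k :=
          hoff k (by simp [Finset.mem_filter, hk])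
        omega
    have h1 := key i hb
    have h2 := key i' hb'
    have heq : Cs.equivFin.symm i = Cs.equivFin.symm i' :=
      Subtype.ext (funext fun k => (h1 k).trans (h2 k).symm)
    exact Cs.equivFin.symm.injective heq
  · intro i
    show (∑ k, (Cs.equivFin.symm i : Fin n → ℕ) k) ≤ n * N
    calc (∑ k, (Cs.equivFin.symm i : Fin n → ℕ) k) ≤ ∑ _k : Fin n, N :=
          Finset.sum_le_sum fun k _ => ((hCsmem _).mp (Cs.equivFin.symm i).2).2 k
      _ = n * N := by simp [Finset.sum_const, mul_comm]

lemma mem_S_of_mem_S' (hn : 0 < n) (I : Ideal (MvPolynomial (Fin n) K)) (j h : ℕ)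
    (hh : ∃ D : StanleyDec K ⊥ (trunc K I j), ∀ i, (∑ k, D.c i k) ≤ h) :
    ∃ D : StanleyDec K ⊥ I, ∀ i, (∑ k, D.c i k) ≤ h := by
  classical
  obtain ⟨D', hD'⟩ := hh
  have hFfin : {b : Fin n → ℕ | monX n K b ∈ I ∧ (∑ k, b k) < j}.Finite := by
    apply (Set.finite_Icc (0 : Fin n → ℕ) fun _ => j).subset
    rintro b ⟨_, hb⟩
    refine ⟨fun k => Nat.zero_le _, fun k => ?_⟩
    have hk := Finset.single_le_sum (f := b) (fun _ _ => Nat.zero_le _) (Finset.mem_univ k)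
    show b k ≤ j
    omega
  set Fs := hFfin.toFinset with hFs
  have hFsmem : ∀ b : Fin n → ℕ, b ∈ Fs ↔ monX n K b ∈ I ∧ (∑ k, b k) < j :=
    fun b => Set.Finite.mem_toFinset hFfin
  have horth : ∀ (i' : Fin D'.r) (b : Fin n → ℕ), b ∈ orth (D'.c i') (D'.Z i') →
      j ≤ ∑ k, b k := by
    intro i' b hb
    have hb2 : b ∈ ⋃ i, orth (D'.c i) (D'.Z i) := Set.mem_iUnion.mpr ⟨i', hb⟩
    rw [← D'.cover] at hb2
    exact ((mem_trunc_iff b).mp hb2.1).2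
  have hjh : Fs.Nonempty → j ≤ h := by
    rintro ⟨b0, hb0⟩
    rw [hFsmem] at hb0
    set b1 : Fin n → ℕ := fun k => b0 k + j with hb1def
    have hb1 : monX n K b1 ∈ trunc K I j := by
      rw [mem_trunc_iff]
      refine ⟨monX_mem_of_le hb0.1 (fun k => Nat.le_add_right _ _), ?_⟩
      have hsum : (∑ k, b1 k) = (∑ k, b0 k) + n * j := by
        rw [hb1def]
        simp [Finset.sum_add_distrib, Finset.sum_const, mul_comm]
      have hnj : j ≤ n * j := Nat.le_mul_of_pos_left j hn
      omega
    have hb2 : b1 ∈ ⋃ i, orth (D'.c i) (D'.Z i) := by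
      rw [← D'.cover]
      exact ⟨hb1, by simp [Ideal.mem_bot, monX_ne_zero]⟩
    obtain ⟨i', hi'⟩ := Set.mem_iUnion.mp hb2
    have hci' := horth i' _ (self_mem_orth (D'.c i') (D'.Z i'))
    exact le_trans hci' (hD' i')
  set pt : Fin Fs.card → (Fin n → ℕ) := fun t => (Fs.equivFin.symm t : Fin n → ℕ) with hpt
  have hptmem : ∀ t, monX n K (pt t) ∈ I ∧ (∑ k, pt t k) < j :=
    fun t => (hFsmem _).mp (Fs.equivFin.symm t).2
  set cc : Fin (D'.r + Fs.card) → (Fin n → ℕ) :=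
    (Sum.elim D'.c pt) ∘ finSumFinEquiv.symm with hcc
  set ZZ : Fin (D'.r + Fs.card) → Finset (Fin n) :=
    (Sum.elim D'.Z fun _ => (∅ : Finset (Fin n))) ∘ finSumFinEquiv.symm with hZZ
  have hGdisj : Pairwise (Function.onFun Disjoint fun s : Fin D'.r ⊕ Fin Fs.card =>
      orth (Sum.elim D'.c pt s) (Sum.elim D'.Z (fun _ => (∅ : Finset (Fin n))) s)) := by
    rintro (i1 | t1) (i2 | t2) hne
    · have hne' : i1 ≠ i2 := fun hh => hne (by rw [hh])
      simpa [Function.onFun] using D'.disj hne'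
    · simp only [Function.onFun, Sum.elim_inl, Sum.elim_inr, orth_empty]
      rw [Set.disjoint_singleton_right]
      intro hmem
      have h1 := horth i1 _ hmem
      have h2 := (hptmem t2).2
      omega
    · simp only [Function.onFun, Sum.elim_inl, Sum.elim_inr, orth_empty]
      rw [Set.disjoint_singleton_left]
      intro hmem
      have h1 := horth i2 _ hmem
      have h2 := (hptmem t1).2
      omega
    · simp only [Function.onFun, Sum.elim_inr, orth_empty]
      rw [Set.disjoint_singleton]
      intro he
      apply hne
      have heq : Fs.equivFin.symm t1 = Fs.equivFin.symm t2 := Subtype.ext he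
      exact congrArg Sum.inr (Fs.equivFin.symm.injective heq)
  refine ⟨⟨D'.r + Fs.card, cc, ZZ, ?_, ?_⟩, ?_⟩
  · have h1 : (⋃ i : Fin (D'.r + Fs.card), orth (cc i) (ZZ i))
        = ⋃ s : Fin D'.r ⊕ Fin Fs.card,
            orth (Sum.elim D'.c pt s) (Sum.elim D'.Z (fun _ => (∅ : Finset (Fin n))) s) :=
      Function.Surjective.iUnion_comp finSumFinEquiv.symm.surjective
        (fun s => orth (Sum.elim D'.c pt s) (Sum.elim D'.Z (fun _ => (∅ : Finset (Fin n))) s))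
    have h3 : (⋃ t : Fin Fs.card, orth (pt t) (∅ : Finset (Fin n)))
        = {b : Fin n → ℕ | monX n K b ∈ I ∧ (∑ k, b k) < j} := by
      ext b
      simp only [orth_empty, Set.mem_iUnion, Set.mem_singleton_iff, Set.mem_setOf_eq]
      constructor
      · rintro ⟨t, rfl⟩
        exact hptmem t
      · intro hb
        refine ⟨Fs.equivFin ⟨b, (hFsmem b).mpr hb⟩, ?_⟩
        exact (congrArg Subtype.val
          (Fs.equivFin.symm_apply_apply ⟨b, (hFsmem b).mpr hb⟩)).symm
    rw [h1, Set.iUnion_sum]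
    simp only [Sum.elim_inl, Sum.elim_inr]
    rw [← D'.cover, h3]
    ext b
    simp only [Set.mem_union, Set.mem_setOf_eq, Ideal.mem_bot, monX_ne_zero b,
      not_false_iff, and_true]
    rw [mem_trunc_iff]
    constructor
    · intro hbI
      rcases le_or_gt j (∑ k, b k) with hle | hlt
      · left; exact ⟨hbI, hle⟩
      · right; exact ⟨hbI, hlt⟩
    · rintro (⟨hb, -⟩ | ⟨hb, -⟩) <;> exact hb
  · intro i1 i2 hne
    exact hGdisj (finSumFinEquiv.symm.injective.ne hne)
  · intro i
    show (∑ k, (Sum.elim D'.c pt) (finSumFinEquiv.symm i) k) ≤ h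
    cases hs : finSumFinEquiv.symm i with
    | inl s =>
      simp only [Sum.elim_inl]
      exact hD' s
    | inr t =>
      simp only [Sum.elim_inr]
      have h2 := (hptmem t).2
      have hj := hjh ⟨pt t, (hFsmem _).mpr (hptmem t)⟩
      omega

end Part2


/-- `hreg(I) ≤ hreg(I_{≥ j})` for every monomial ideal `I` and `j ≥ 0`,
where `I_{≥ j}` is generated by the homogeneous elements of `I` of degree `≥ j`. -/
theorem hreg_le_hreg_trunc (n m : ℕ) (K : Type*) [Field K]
    (a : Fin m → (Fin n → ℕ)) (I : Ideal (MvPolynomial (Fin n) K))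
    (hI : I = Ideal.span (Set.range fun i => monX n K (a i)))
    (hmin : ∀ i j, i ≠ j → ¬ a i ≤ a j) (j : ℕ) :
    hregQ K ⊥ I ≤ hregQ K ⊥ (trunc K I j) := by
  unfold hregQ
  rcases Nat.eq_zero_or_pos n with hn | hn
  · subst hn
    refine le_trans (Nat.sInf_le ?_) (Nat.zero_le _)
    by_cases hz : monX 0 K 0 ∈ I
    · refine ⟨⟨1, fun _ => 0, fun _ => ∅, ?_, ?_⟩, fun i => le_of_eq (by simp)⟩
      · ext b
        have hb : b = 0 := funext fun k => k.elim0
        subst hb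
        simp only [Set.mem_setOf_eq, Ideal.mem_bot, Set.mem_iUnion, HregAux.orth_empty]
        constructor
        · intro _; exact ⟨0, rfl⟩
        · intro _; exact ⟨hz, HregAux.monX_ne_zero 0⟩
      · intro i1 i2 hne; exact absurd (Subsingleton.elim i1 i2) hne
    · refine ⟨⟨0, Fin.elim0, Fin.elim0, ?_, ?_⟩, fun i => i.elim0⟩
      · ext b
        have hb : b = 0 := funext fun k => k.elim0
        subst hb
        simp only [Set.mem_setOf_eq, Set.mem_iUnion]
        constructor
        · rintro ⟨h1, -⟩; exact absurd h1 hz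
        · rintro ⟨i, -⟩; exact i.elim0
      · intro i; exact i.elim0
  · obtain ⟨h1, hex⟩ := exists_dec_trunc a I hI j
    have hne : {h | ∃ D : StanleyDec K ⊥ (trunc K I j), ∀ i, (∑ k, D.c i k) ≤ h}.Nonempty :=
      ⟨h1, hex⟩
    exact Nat.sInf_le (mem_S_of_mem_S' hn I j _ (Nat.sInf_mem hne))
end
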